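/- For every real α ∈ (1,2) and every real v, sign(v)|v|^α = (Γ(α+1) cos(πα/2)/π) ∫_ℝ sign(ω)(sin(ωv) - ωv) / |ω|^(α+1) dω. -/

import Mathlib

open Real MeasureTheory Set Filter

lemma exp_mul_bdd_integrableOn {t : ℝ} (ht : 0 < t) {g : ℝ → ℝ} (hg : Measurable g)
    (hb : ∀ x, |g x| ≤ 1) :
    IntegrableOn (fun x => Real.exp (-(t*x)) * g x) (Ioi (0:ℝ)) := by
  refine ((exp_neg_integrableOn_Ioi 0 ht).mono' ?_ ?_)
  · exact (Real.measurable_exp.comp ((measurable_const.mul measurable_id).neg)).mul hg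
      |>.aestronglyMeasurable
  · filter_upwards with x
    have := hb x
    rw [norm_mul, Real.norm_eq_abs, Real.norm_eq_abs, Real.abs_exp]
    calc Real.exp (-(t*x)) * |g x| ≤ Real.exp (-(t*x)) * 1 := by
          exact mul_le_mul_of_nonneg_left this (Real.exp_nonneg _)
      _ = Real.exp (-t*x) := by rw [mul_one, neg_mul]

lemma tendsto_exp_mul_bdd {t : ℝ} (ht : 0 < t) {g : ℝ → ℝ} {c : ℝ} (hc : 0 ≤ c)
    (hb : ∀ x, |g x| ≤ c) :
    Tendsto (fun x => Real.exp (-(t*x)) * g x) atTop (nhds 0) := by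
  refine squeeze_zero_norm (a := fun x => c * Real.exp (-(t*x))) (fun x => ?_) ?_
  · show ‖_‖ ≤ c * Real.exp (-(t*x))
    rw [norm_mul, Real.norm_eq_abs, Real.norm_eq_abs, Real.abs_exp, mul_comm]
    exact mul_le_mul_of_nonneg_right (hb x) (Real.exp_nonneg _)
  · rw [show (0:ℝ) = c * 0 by ring]
    refine Tendsto.const_mul c ?_
    refine Real.tendsto_exp_atBot.comp ?_
    exact tendsto_neg_atBot_iff.mpr (tendsto_id.const_mul_atTop ht)

lemma laplace_sin {t : ℝ} (ht : 0 < t) :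
    ∫ x in Ioi (0:ℝ), Real.exp (-(t*x)) * Real.sin x = 1/(1+t^2) := by
  have h1 : (0:ℝ) < 1 + t^2 := by positivity
  have := MeasureTheory.integral_Ioi_of_hasDerivAt_of_tendsto
    (f := fun x => -(Real.exp (-(t*x)) * (t * Real.sin x + Real.cos x))/(1+t^2))
    (f' := fun x => Real.exp (-(t*x)) * Real.sin x) (a := 0) (m := 0)
    ?_ ?_ ?_ ?_
  · rw [this]; field_simp; simp
  · apply Continuous.continuousWithinAt
    apply Continuous.div_const
    continuity
  · intro x hx
    have hd : HasDerivAt (fun x => -(Real.exp (-(t*x)) * (t * Real.sin x + Real.cos x))/(1+t^2))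
        ((-((-t) * Real.exp (-(t*x)) * (t * Real.sin x + Real.cos x)
          + Real.exp (-(t*x)) * (t * Real.cos x + (- Real.sin x))))/(1+t^2)) x := by
      have h2 : HasDerivAt (fun x : ℝ => -(t*x)) (-t) x := by
        simpa using ((hasDerivAt_id x).const_mul (-t))
      have he : HasDerivAt (fun x => Real.exp (-(t*x))) ((-t) * Real.exp (-(t*x))) x := by
        simpa [mul_comm, Function.comp_def] using (Real.hasDerivAt_exp (-(t*x))).comp x h2
      have hs : HasDerivAt (fun x => t * Real.sin x + Real.cos x)
          (t * Real.cos x + (- Real.sin x)) x :=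
        ((Real.hasDerivAt_sin x).const_mul t).add (Real.hasDerivAt_cos x)
      exact ((he.mul hs).neg).div_const _
    refine hd.congr_deriv ?_
    field_simp
    ring
  · exact exp_mul_bdd_integrableOn ht Real.measurable_sin (fun x => Real.abs_sin_le_one x)
  · have : Tendsto (fun x => Real.exp (-(t*x)) * (-(t * Real.sin x + Real.cos x)/(1+t^2)))
        atTop (nhds 0) := by
      refine tendsto_exp_mul_bdd (c := (t+1)/(1+t^2)) ht ?_ ?_
      · exact div_nonneg (by positivity : (0:ℝ) ≤ t+1) h1.le
      · intro x
        rw [abs_div, abs_of_pos h1, abs_neg, div_le_div_iff_of_pos_right h1]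
        calc |t * Real.sin x + Real.cos x| ≤ |t * Real.sin x| + |Real.cos x| := abs_add_le _ _
          _ ≤ t * 1 + 1 := by
              refine add_le_add ?_ (Real.abs_cos_le_one x)
              rw [abs_mul, abs_of_pos ht]
              exact mul_le_mul_of_nonneg_left (Real.abs_sin_le_one x) ht.le
          _ = t + 1 := by ring
    refine this.congr (fun x => ?_)
    field_simp

lemma M_val {α : ℝ} (h1 : 1 < α) (h2 : α < 2) :
    ∫ t in Ioi (0:ℝ), t^(α-2)/(1+t^2) = π/(2 * Real.sin (π*(α-1)/2)) := by
  have ha1 : (0:ℝ) < (α-1)/2 := by linarith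
  have ha2 : (0:ℝ) < 1-(α-1)/2 := by linarith
  set F : ℝ → ℝ → ℝ := fun t s => t^(α-2) * (Real.exp (-s) * Real.exp (-(s * t^2))) with hF
  have hFeq : ∀ s > (0:ℝ), ∀ t ∈ Ioi (0:ℝ),
      F t s = Real.exp (-s) * (t ^ (α-2) * Real.exp (-s * t^(2:ℝ))) := by
    intro s hs t ht
    have ht' : (0:ℝ) ≤ t := le_of_lt ht
    simp only [hF]
    rw [show t^(2:ℝ) = t^(2:ℕ) by rw [← Real.rpow_natCast t 2]; norm_num]
    ring_nf
  have hslice : ∀ s ∈ Ioi (0:ℝ), IntegrableOn (fun t => F t s) (Ioi (0:ℝ)) := by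
    intro s hs
    have : IntegrableOn (fun t => t ^ (α-2) * Real.exp (-s * t^(2:ℝ))) (Ioi 0) :=
      integrableOn_rpow_mul_exp_neg_mul_rpow (by linarith) (by norm_num) hs
    exact IntegrableOn.congr_fun (this.const_mul (Real.exp (-s)))
      (fun t ht => (hFeq s hs t ht).symm) measurableSet_Ioi
  have hinner : ∀ s ∈ Ioi (0:ℝ), ∫ t in Ioi (0:ℝ), F t s
      = (Real.exp (-s) * s ^ (-((α-1)/2))) * ((1/2) * Real.Gamma ((α-1)/2)) := by
    intro s hs
    rw [setIntegral_congr_fun measurableSet_Ioi (hFeq s hs), integral_const_mul,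
      integral_rpow_mul_exp_neg_mul_rpow (by norm_num) (by linarith) hs]
    rw [show (α - 2 + 1) / 2 = (α-1)/2 by ring, show -(α - 2 + 1) / 2 = -((α-1)/2) by ring]
    ring
  have hFnn : ∀ s ∈ Ioi (0:ℝ), ∀ t ∈ Ioi (0:ℝ), 0 ≤ F t s := by
    intro s hs t ht
    have := Real.rpow_pos_of_pos ht (α-2)
    positivity
  have hmeas : AEStronglyMeasurable (Function.uncurry F)
      ((volume.restrict (Ioi 0)).prod (volume.restrict (Ioi 0))) := by
    apply Measurable.aestronglyMeasurable
    apply Measurable.mul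
    · exact (measurable_fst.pow_const _)
    · exact ((measurable_snd.neg.exp).mul
        ((measurable_snd.mul (measurable_fst.pow_const 2)).neg.exp))
  have hIntS : IntegrableOn
      (fun s => (Real.exp (-s) * s ^ (-((α-1)/2))) * ((1/2) * Real.Gamma ((α-1)/2)))
      (Ioi (0:ℝ)) := by
    refine IntegrableOn.congr_fun ((Real.GammaIntegral_convergent ha2).mul_const
      ((1/2) * Real.Gamma ((α-1)/2))) (fun s hs => ?_) measurableSet_Ioi
    rw [show 1 - (α-1)/2 - 1 = -((α-1)/2) by ring]
  have hswap : ∫ t in Ioi (0:ℝ), ∫ s in Ioi (0:ℝ), F t s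
      = ∫ s in Ioi (0:ℝ), ∫ t in Ioi (0:ℝ), F t s := by
    apply MeasureTheory.integral_integral_swap
    rw [MeasureTheory.integrable_prod_iff' hmeas]
    constructor
    · filter_upwards [self_mem_ae_restrict measurableSet_Ioi] with s hs
      exact hslice s hs
    · refine hIntS.congr_fun (fun s hs => ?_) measurableSet_Ioi
      beta_reduce
      rw [← hinner s hs]
      refine setIntegral_congr_fun measurableSet_Ioi (fun t ht => ?_)
      simp only [Function.uncurry]
      exact (Real.norm_of_nonneg (hFnn s hs t ht)).symm
  have hLHS : ∫ t in Ioi (0:ℝ), t^(α-2)/(1+t^2) = ∫ t in Ioi (0:ℝ), ∫ s in Ioi (0:ℝ), F t s := by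
    refine setIntegral_congr_fun measurableSet_Ioi (fun t ht => ?_)
    have ht2 : (0:ℝ) < 1 + t^2 := by positivity
    have : ∫ s in Ioi (0:ℝ), F t s
        = t^(α-2) * ∫ s in Ioi (0:ℝ), s^((1:ℝ)-1) * Real.exp (-((1+t^2) * s)) := by
      rw [integral_const_mul]
      congr 1
      refine setIntegral_congr_fun measurableSet_Ioi (fun s hs => ?_)
      rw [sub_self, Real.rpow_zero, one_mul, ← Real.exp_add]
      ring_nf
    rw [this, integral_rpow_mul_exp_neg_mul_Ioi one_pos ht2, Real.Gamma_one]
    rw [Real.rpow_one]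
    field_simp
  rw [hLHS, hswap, setIntegral_congr_fun measurableSet_Ioi hinner, integral_mul_const]
  have : ∫ s in Ioi (0:ℝ), Real.exp (-s) * s ^ (-((α-1)/2))
      = Real.Gamma (1-(α-1)/2) := by
    rw [Real.Gamma_eq_integral ha2]
    refine setIntegral_congr_fun measurableSet_Ioi (fun s hs => ?_)
    rw [show 1 - (α-1)/2 - 1 = -((α-1)/2) by ring]
  rw [this]
  rw [show Real.Gamma (1 - (α-1)/2) * ((1/2) * Real.Gamma ((α-1)/2))
      = Real.Gamma ((α-1)/2) * Real.Gamma (1 - (α-1)/2) / 2 by ring,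
    Real.Gamma_mul_Gamma_one_sub]
  rw [show π * ((α-1)/2) = π * (α-1)/2 by ring]
  ring

lemma M_integrable {α : ℝ} (h1 : 1 < α) (h2 : α < 2) :
    IntegrableOn (fun t : ℝ => t^(α-2)/(1+t^2)) (Ioi (0:ℝ)) := by
  have hmeas : Measurable (fun t : ℝ => t^(α-2)/(1+t^2)) :=
    (measurable_id.pow_const _).div ((measurable_const.add (measurable_id.pow_const 2)))
  rw [← Ioc_union_Ioi_eq_Ioi (zero_le_one), integrableOn_union]
  constructor
  · have hint : IntegrableOn (fun t : ℝ => t^(α-2)) (Ioc (0:ℝ) 1) := by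
      rw [← intervalIntegrable_iff_integrableOn_Ioc_of_le zero_le_one]
      apply intervalIntegral.intervalIntegrable_rpow'
      linarith
    refine hint.mono' hmeas.aestronglyMeasurable ?_
    filter_upwards [self_mem_ae_restrict measurableSet_Ioc] with t ht
    have ht0 : (0:ℝ) < t := ht.1
    have h12 : (1:ℝ) ≤ 1 + t^2 := by nlinarith
    rw [Real.norm_eq_abs, abs_div, abs_of_pos (Real.rpow_pos_of_pos ht0 _),
      abs_of_pos (by nlinarith : (0:ℝ) < 1 + t^2)]
    calc t^(α-2)/(1+t^2) ≤ t^(α-2)/1 :=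
          div_le_div_of_nonneg_left (Real.rpow_pos_of_pos ht0 _).le (by norm_num) h12
      _ = t^(α-2) := div_one _
  · have hint : IntegrableOn (fun t : ℝ => t^(α-4)) (Ioi (1:ℝ)) :=
      integrableOn_Ioi_rpow_of_lt (by linarith) one_pos
    refine hint.mono' hmeas.aestronglyMeasurable ?_
    filter_upwards [self_mem_ae_restrict measurableSet_Ioi] with t ht
    have ht0 : (0:ℝ) < t := lt_trans one_pos ht
    rw [Real.norm_eq_abs, abs_div, abs_of_pos (Real.rpow_pos_of_pos ht0 _),
      abs_of_pos (by nlinarith : (0:ℝ) < 1 + t^2)]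
    have : t^(α-4) = t^(α-2)/t^(2:ℝ) := by
      rw [← Real.rpow_sub ht0]; norm_num
      ring_nf
    rw [this]
    apply div_le_div_of_nonneg_left (Real.rpow_pos_of_pos ht0 _).le (by positivity)
    rw [show t^(2:ℝ) = t^(2:ℕ) by rw [← Real.rpow_natCast t 2]; norm_num]
    nlinarith

lemma laplace_id {t : ℝ} (ht : 0 < t) :
    ∫ x in Ioi (0:ℝ), x * Real.exp (-(t*x)) = 1/t^2 := by
  have := integral_rpow_mul_exp_neg_mul_Ioi (show (0:ℝ) < 2 by norm_num) ht
  rw [show (2:ℝ)-1 = 1 by norm_num] at this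
  simp only [Real.rpow_one] at this
  have hG2 : Real.Gamma 2 = 1 := by
    rw [show (2:ℝ) = 1+1 by norm_num, Real.Gamma_add_one one_ne_zero, Real.Gamma_one, mul_one]
  rw [this, hG2, mul_one, show (2:ℝ) = ((2:ℕ):ℝ) by norm_num, Real.rpow_natCast,
    div_pow, one_pow]

lemma laplace_id_integrable {t : ℝ} (ht : 0 < t) :
    IntegrableOn (fun x => x * Real.exp (-(t*x))) (Ioi (0:ℝ)) := by
  have := integrableOn_rpow_mul_exp_neg_mul_rpow (s := 1) (p := 1) (b := t)
    (by norm_num) zero_lt_one ht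
  refine IntegrableOn.congr_fun this (fun x hx => ?_) measurableSet_Ioi
  simp [Real.rpow_one, neg_mul]

lemma J_val {α : ℝ} (h1 : 1 < α) (h2 : α < 2) :
    ∫ x in Ioi (0:ℝ), (x - Real.sin x) * x^(-(α+1))
      = π/(2 * Real.sin (π*(α-1)/2)) / Real.Gamma (α+1) := by
  have hG : (0:ℝ) < Real.Gamma (α+1) := Real.Gamma_pos_of_pos (by linarith)
  set G : ℝ → ℝ → ℝ := fun x t => (x - Real.sin x) * (t^α * Real.exp (-(x*t))) with hGdef
  have hstep1 : ∀ x ∈ Ioi (0:ℝ), ∫ t in Ioi (0:ℝ), G x t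
      = (x - Real.sin x) * x^(-(α+1)) * Real.Gamma (α+1) := by
    intro x hx
    have : ∫ t in Ioi (0:ℝ), G x t
        = (x - Real.sin x) * ∫ t in Ioi (0:ℝ), t^(α+1-1) * Real.exp (-(x*t)) := by
      rw [integral_const_mul]
      congr 1
      refine setIntegral_congr_fun measurableSet_Ioi (fun t ht => ?_)
      rw [show α+1-1 = α by ring]
    rw [this, integral_rpow_mul_exp_neg_mul_Ioi (by linarith) hx, one_div,
      Real.inv_rpow (le_of_lt hx), ← Real.rpow_neg (le_of_lt hx)]
    ring
  have hstep2 : ∀ t ∈ Ioi (0:ℝ), ∫ x in Ioi (0:ℝ), G x t = t^(α-2)/(1+t^2) := by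
    intro t ht
    have ht2 : (0:ℝ) < 1 + t^2 := by positivity
    have hre : ∫ x in Ioi (0:ℝ), G x t
        = t^α * ∫ x in Ioi (0:ℝ), (x * Real.exp (-(t*x)) - Real.exp (-(t*x)) * Real.sin x) := by
      rw [← integral_const_mul]
      refine setIntegral_congr_fun measurableSet_Ioi (fun x hx => ?_)
      simp only [hGdef]
      rw [mul_comm x t]
      ring
    rw [hre, integral_sub (laplace_id_integrable ht)
        (exp_mul_bdd_integrableOn ht Real.measurable_sin (fun x => Real.abs_sin_le_one x)),
      laplace_id ht, laplace_sin ht]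
    rw [show t^(α-2) = t^α / t^(2:ℝ) by rw [← Real.rpow_sub ht],
      show t^(2:ℝ) = t^(2:ℕ) by rw [← Real.rpow_natCast t 2]; norm_num]
    have htp : (0:ℝ) < t^α := Real.rpow_pos_of_pos ht α
    have ht0 : (0:ℝ) < t := ht
    field_simp [ht0.ne']
    ring
  have hGnn : ∀ x ∈ Ioi (0:ℝ), ∀ t ∈ Ioi (0:ℝ), 0 ≤ G x t := by
    intro x hx t ht
    have h1 : Real.sin x ≤ x := Real.sin_le (le_of_lt hx)
    have h2 : (0:ℝ) < t^α := Real.rpow_pos_of_pos ht α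
    have : (0:ℝ) ≤ x - Real.sin x := by linarith
    positivity
  have hmeas : AEStronglyMeasurable (Function.uncurry G)
      ((volume.restrict (Ioi (0:ℝ))).prod (volume.restrict (Ioi (0:ℝ)))) := by
    apply Measurable.aestronglyMeasurable
    exact (measurable_fst.sub measurable_fst.sin).mul
      ((measurable_snd.pow_const α).mul ((measurable_fst.mul measurable_snd).neg.exp))
  have hslice : ∀ t ∈ Ioi (0:ℝ), IntegrableOn (fun x => G x t) (Ioi (0:ℝ)) := by
    intro t ht
    have : IntegrableOn
        (fun x => t^α * (x * Real.exp (-(t*x)) - Real.exp (-(t*x)) * Real.sin x)) (Ioi 0) :=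
      (((laplace_id_integrable ht).sub
        (exp_mul_bdd_integrableOn ht Real.measurable_sin
          (fun x => Real.abs_sin_le_one x))).const_mul _)
    refine IntegrableOn.congr_fun this (fun x hx => ?_) measurableSet_Ioi
    simp only [hGdef]
    rw [mul_comm x t]
    ring
  have hswap : ∫ x in Ioi (0:ℝ), ∫ t in Ioi (0:ℝ), G x t
      = ∫ t in Ioi (0:ℝ), ∫ x in Ioi (0:ℝ), G x t := by
    apply MeasureTheory.integral_integral_swap
    rw [MeasureTheory.integrable_prod_iff hmeas]
    constructor
    · filter_upwards [self_mem_ae_restrict measurableSet_Ioi] with x hx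
      -- integrable in t for fixed x
      have : IntegrableOn (fun t => (x - Real.sin x) * (t^α * Real.exp (-(x*t)))) (Ioi 0) := by
        have hb : IntegrableOn (fun t => t^α * Real.exp (-x * t^(1:ℝ))) (Ioi 0) :=
          integrableOn_rpow_mul_exp_neg_mul_rpow (by linarith) zero_lt_one hx
        refine ((IntegrableOn.congr_fun hb (fun t ht => ?_) measurableSet_Ioi).const_mul _)
        rw [Real.rpow_one, neg_mul]
      exact this
    · -- Integrable (fun x => ∫ t, ‖G x t‖)
      have base : IntegrableOn (fun x => (x - Real.sin x) * x^(-(α+1))) (Ioi (0:ℝ)) := by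
        have hmeas2 : Measurable (fun x : ℝ => (x - Real.sin x) * x^(-(α+1))) :=
          (measurable_id.sub Real.measurable_sin).mul (measurable_id.pow_const _)
        rw [← Ioc_union_Ioi_eq_Ioi (zero_le_one), integrableOn_union]
        constructor
        · have hint : IntegrableOn (fun x : ℝ => x^((2:ℝ)-α)) (Ioc (0:ℝ) 1) := by
            rw [← intervalIntegrable_iff_integrableOn_Ioc_of_le zero_le_one]
            apply intervalIntegral.intervalIntegrable_rpow'
            linarith
          refine hint.mono' hmeas2.aestronglyMeasurable ?_
          filter_upwards [self_mem_ae_restrict measurableSet_Ioc] with x hx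
          have hx0 : (0:ℝ) < x := hx.1
          have hx1 : x ≤ 1 := hx.2
          have hs : Real.sin x ≤ x := Real.sin_le hx0.le
          have hcube : x - Real.sin x ≤ x^3 := by
            have := Real.sin_gt_sub_cube hx0
            nlinarith [pow_pos hx0 3]
          have hp : (0:ℝ) < x^(-(α+1)) := Real.rpow_pos_of_pos hx0 _
          rw [Real.norm_eq_abs, abs_mul, abs_of_nonneg (by linarith : (0:ℝ) ≤ x - Real.sin x),
            abs_of_pos hp]
          calc (x - Real.sin x) * x^(-(α+1)) ≤ x^3 * x^(-(α+1)) :=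
                mul_le_mul_of_nonneg_right hcube hp.le
            _ = x^((2:ℝ)-α) := by
                rw [show x^3 = x^((3:ℕ):ℝ) by rw [Real.rpow_natCast],
                  ← Real.rpow_add hx0]
                congr 1
                push_cast
                ring
        · have hint : IntegrableOn (fun x : ℝ => 2 * x^(-α)) (Ioi (1:ℝ)) :=
            (integrableOn_Ioi_rpow_of_lt (by linarith) one_pos).const_mul 2
          refine hint.mono' hmeas2.aestronglyMeasurable ?_
          filter_upwards [self_mem_ae_restrict measurableSet_Ioi] with x hx
          have hx0 : (0:ℝ) < x := lt_trans one_pos hx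
          have hs : Real.sin x ≤ x := Real.sin_le hx0.le
          have hbd : x - Real.sin x ≤ 2*x := by
            have h := Real.neg_one_le_sin x
            have hx1 : (1:ℝ) < x := hx
            linarith
          have hp : (0:ℝ) < x^(-(α+1)) := Real.rpow_pos_of_pos hx0 _
          rw [Real.norm_eq_abs, abs_mul, abs_of_nonneg (by linarith : (0:ℝ) ≤ x - Real.sin x),
            abs_of_pos hp]
          calc (x - Real.sin x) * x^(-(α+1)) ≤ (2*x) * x^(-(α+1)) :=
                mul_le_mul_of_nonneg_right hbd hp.le
            _ = 2 * x^(-α) := by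
                have h := Real.rpow_add hx0 1 (-(α+1))
                rw [Real.rpow_one] at h
                rw [mul_assoc, ← h, show (1:ℝ) + -(α+1) = -α by ring]
      have : IntegrableOn (fun x => (x - Real.sin x) * x^(-(α+1)) * Real.Gamma (α+1))
          (Ioi (0:ℝ)) := base.mul_const _
      refine IntegrableOn.congr_fun this (fun x hx => ?_) measurableSet_Ioi
      rw [← hstep1 x hx]
      refine setIntegral_congr_fun measurableSet_Ioi (fun t ht => ?_)
      exact (Real.norm_of_nonneg (hGnn x hx t ht)).symm
  have key : (∫ x in Ioi (0:ℝ), (x - Real.sin x) * x^(-(α+1))) * Real.Gamma (α+1)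
      = π/(2 * Real.sin (π*(α-1)/2)) := by
    rw [← integral_mul_const]
    calc ∫ x in Ioi (0:ℝ), (x - Real.sin x) * x^(-(α+1)) * Real.Gamma (α+1)
        = ∫ x in Ioi (0:ℝ), ∫ t in Ioi (0:ℝ), G x t :=
          (setIntegral_congr_fun measurableSet_Ioi hstep1).symm
      _ = ∫ t in Ioi (0:ℝ), ∫ x in Ioi (0:ℝ), G x t := hswap
      _ = ∫ t in Ioi (0:ℝ), t^(α-2)/(1+t^2) :=
          setIntegral_congr_fun measurableSet_Ioi hstep2
      _ = π/(2 * Real.sin (π*(α-1)/2)) := M_val h1 h2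
  rw [eq_div_iff (ne_of_gt hG)]
  exact key

theorem vonBahrEssen_sign_abs_rpow_gt_one (α : ℝ) (hα : α ∈ Set.Ioo (1:ℝ) 2) (v : ℝ) :
    Real.sign v * |v| ^ α = (Real.Gamma (α + 1) * Real.cos (π * α / 2) / π) *
      ∫ ω : ℝ, Real.sign ω * (Real.sin (ω * v) - ω * v) / |ω| ^ (α + 1) := by
  obtain ⟨h1, h2⟩ := hα
  have hπ : (0:ℝ) < π := Real.pi_pos
  have hΓ : (0:ℝ) < Real.Gamma (α+1) := Real.Gamma_pos_of_pos (by linarith)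
  have hcos : Real.cos (π * α / 2) < 0 := by
    apply Real.cos_neg_of_pi_div_two_lt_of_lt
    · rw [div_lt_div_iff_of_pos_right two_pos]
      nlinarith
    · nlinarith
  have hS : Real.sin (π*(α-1)/2) = -Real.cos (π*α/2) := by
    rw [show π*(α-1)/2 = π*α/2 - π/2 by ring, Real.sin_sub_pi_div_two]
  have main : ∀ w : ℝ, 0 < w →
      (Real.Gamma (α + 1) * Real.cos (π * α / 2) / π) *
      (∫ ω : ℝ, Real.sign ω * (Real.sin (ω * w) - ω * w) / |ω| ^ (α + 1)) = w ^ α := by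
    intro w hw
    set g : ℝ → ℝ := fun x => -((x - Real.sin x) * x^(-(α+1))) with hgdef
    have habs : (∫ ω : ℝ, Real.sign ω * (Real.sin (ω * w) - ω * w) / |ω| ^ (α + 1))
        = ∫ ω : ℝ, (fun y => (Real.sin (y*w) - y*w)/|y|^(α+1)) |ω| := by
      congr 1
      funext ω
      rcases lt_trichotomy ω 0 with hω | hω | hω
      · have ha : |ω| = -ω := abs_of_neg hω
        simp only [Real.sign_of_neg hω, ha, Real.sin_neg, neg_mul, abs_neg, abs_abs]
        ring
      · simp [hω]
      · have ha : |ω| = ω := abs_of_pos hω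
        simp only [Real.sign_of_pos hω, ha, one_mul, abs_abs]
    rw [habs, integral_comp_abs (f := fun y => (Real.sin (y*w) - y*w)/|y|^(α+1))]
    have hIoi : ∫ y in Ioi (0:ℝ), (Real.sin (y*w) - y*w)/|y|^(α+1)
        = (w^α) * ∫ x in Ioi (0:ℝ), g x := by
      have hc : ∀ y ∈ Ioi (0:ℝ), (Real.sin (y*w) - y*w)/|y|^(α+1) = w^(α+1) * g (w*y) := by
        intro y hy
        have hy0 : (0:ℝ) < y := hy
        simp only [hgdef]
        rw [abs_of_pos hy0, mul_comm y w, Real.mul_rpow hw.le hy0.le,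
          Real.rpow_neg hw.le, Real.rpow_neg hy0.le]
        have hwp : (0:ℝ) < w^(α+1) := Real.rpow_pos_of_pos hw _
        have hyp : (0:ℝ) < y^(α+1) := Real.rpow_pos_of_pos hy0 _
        field_simp
        ring
      rw [setIntegral_congr_fun measurableSet_Ioi hc, integral_const_mul,
        integral_comp_mul_left_Ioi g 0 hw, mul_zero, smul_eq_mul, ← mul_assoc]
      congr 1
      rw [show w⁻¹ = w^(-1:ℝ) by rw [Real.rpow_neg_one], ← Real.rpow_add hw]
      norm_num
    rw [hIoi]
    have hg : ∫ x in Ioi (0:ℝ), g x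
        = -(π/(2 * Real.sin (π*(α-1)/2)) / Real.Gamma (α+1)) := by
      simp only [hgdef]
      rw [integral_neg, J_val h1 h2]
    rw [hg, hS]
    have hcos' : Real.cos (π*α/2) ≠ 0 := ne_of_lt hcos
    field_simp
    rw [mul_comm α π, div_self hcos']
  rcases lt_trichotomy v 0 with hv | hv | hv
  · have hneg : (∫ ω : ℝ, Real.sign ω * (Real.sin (ω * v) - ω * v) / |ω| ^ (α + 1))
        = -∫ ω : ℝ, Real.sign ω * (Real.sin (ω * (-v)) - ω * (-v)) / |ω| ^ (α + 1) := by
      rw [← integral_neg]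
      congr 1
      funext ω
      rw [mul_neg, Real.sin_neg]
      ring
    rw [hneg, Real.sign_of_neg hv, abs_of_neg hv, mul_neg, main (-v) (by linarith), neg_one_mul]
  · simp [hv]
  · rw [Real.sign_of_pos hv, abs_of_pos hv, one_mul, main v hv]
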